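/- Let G be a finite connected graph of order n ≥ 2. Then sn(G) = 1 if and only if G is bipartite. -/

import Mathlib

open SimpleGraph

/-- `C₀` is a Sudoku coloring of `G` on the vertex set `S`, with colors in `Fin k`:
there is exactly one proper `k`-coloring of `G` that restricts to `C₀` on `S`.
(Note that such a `C₀` is automatically a proper coloring of the induced subgraph `G[S]`.) -/
def IsSudokuColoring {V : Type*} (G : SimpleGraph V) (k : ℕ) (S : Set V)
    (C₀ : V → Fin k) : Prop :=
  ∃! c : G.Coloring (Fin k), ∀ v ∈ S, c v = C₀ v

/-- The Sudoku number of a finite graph `G`: the minimum cardinality of a set `S` of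
vertices carrying a Sudoku coloring of `G` (with `k = χ(G)` colors). -/
noncomputable def sudokuNumber {V : Type*} [Fintype V] (G : SimpleGraph V) : ℕ :=
  sInf {n | ∃ (S : Finset V) (C₀ : V → Fin G.chromaticNumber.toNat),
    IsSudokuColoring G G.chromaticNumber.toNat S C₀ ∧ S.card = n}

/-- A graph is bipartite if its vertex set can be partitioned into two parts such that
every edge joins the two parts. -/
def IsBipartite {V : Type*} (G : SimpleGraph V) : Prop :=
  ∃ A : Set V, ∀ u v, G.Adj u v → (u ∈ A ↔ v ∉ A)

lemma exists_adj_of_connected {V : Type*} (G : SimpleGraph V) (hconn : G.Connected)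
    (hnt : Nontrivial V) : ∃ u v, G.Adj u v := by
  obtain ⟨u, v, huv⟩ := exists_pair_ne V
  obtain ⟨p⟩ := hconn u v
  cases p with
  | nil => exact absurd rfl huv
  | cons h _ => exact ⟨_, _, h⟩

lemma two_le_chrom {V : Type*} (G : SimpleGraph V) {u v : V} (h : G.Adj u v) :
    2 ≤ G.chromaticNumber := by
  by_contra hlt
  push_neg at hlt
  have h1 : G.chromaticNumber ≤ (1 : ℕ) := by
    exact_mod_cast Order.le_of_lt_add_one (by exact_mod_cast hlt)
  rw [chromaticNumber_le_iff_colorable] at h1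
  obtain ⟨C⟩ := h1
  exact C.valid h (Subsingleton.elim _ _)

lemma walk_two_coloring {V : Type*} {G : SimpleGraph V} (c c' : G.Coloring (Fin 2))
    {u v : V} (p : G.Walk u v) (h : c' u = c u) : c' v = c v := by
  have fin2 : ∀ x y z : Fin 2, x ≠ z → y ≠ z → x = y := by decide
  induction p with
  | nil => exact h
  | cons hadj q ih =>
    apply ih
    exact fin2 _ _ _ (by rw [← h]; exact (c'.valid hadj).symm) (c.valid hadj).symm

/-- A finite connected graph of order at least 2 has Sudoku number 1 if and only if
it is bipartite. -/
theorem sudokuNumber_eq_one_iff_bipartite {V : Type*} [Fintype V] (G : SimpleGraph V)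
    (hconn : G.Connected) (hn : 2 ≤ Fintype.card V) :
    sudokuNumber G = 1 ↔ _root_.IsBipartite G := by
  classical
  have hnt : Nontrivial V := Fintype.one_lt_card_iff_nontrivial.mp hn
  obtain ⟨u₀, w₀, hadj₀⟩ := exists_adj_of_connected G hconn hnt
  have hfin : G.chromaticNumber ≠ ⊤ :=
    (lt_of_le_of_lt (G.colorable_of_fintype).chromaticNumber_le (WithTop.coe_lt_top _)).ne
  have hcast : (G.chromaticNumber.toNat : ℕ∞) = G.chromaticNumber := ENat.coe_toNat hfin
  have h2k : 2 ≤ G.chromaticNumber.toNat := by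
    have h2 := two_le_chrom G hadj₀
    rw [← hcast] at h2
    exact_mod_cast h2
  constructor
  · intro h
    unfold sudokuNumber at h
    have hne : {n | ∃ (S : Finset V) (C₀ : V → Fin G.chromaticNumber.toNat),
        IsSudokuColoring G G.chromaticNumber.toNat S C₀ ∧ S.card = n}.Nonempty := by
      by_contra hemp
      rw [Set.not_nonempty_iff_eq_empty] at hemp
      rw [hemp, Nat.sInf_empty] at h
      omega
    have hmem := Nat.sInf_mem hne
    rw [h] at hmem
    obtain ⟨S, C₀, ⟨c, hc, huniq⟩, hcard⟩ := hmem
    obtain ⟨v₀, hS⟩ := Finset.card_eq_one.mp hcard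
    subst hS
    have hcv₀ : c v₀ = C₀ v₀ := hc v₀ (by simp)
    have hk2 : G.chromaticNumber.toNat = 2 := by
      by_contra hne2
      have h3 : 3 ≤ G.chromaticNumber.toNat := by omega
      have hcard' : 1 < ((Finset.univ : Finset (Fin G.chromaticNumber.toNat)).erase
          (C₀ v₀)).card := by
        rw [Finset.card_erase_of_mem (Finset.mem_univ _), Finset.card_univ, Fintype.card_fin]
        omega
      obtain ⟨a, ha, b, hb, hab⟩ := Finset.one_lt_card.mp hcard'
      have ha' : a ≠ C₀ v₀ := Finset.ne_of_mem_erase ha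
      have hb' : b ≠ C₀ v₀ := Finset.ne_of_mem_erase hb
      have hsurj : Function.Surjective c :=
        (le_chromaticNumber_iff_forall_surjective.mp (le_of_eq hcast)) c
      obtain ⟨w, hw⟩ := hsurj a
      let c' : G.Coloring (Fin G.chromaticNumber.toNat) :=
        Coloring.mk (fun v => Equiv.swap a b (c v))
          (fun hadj heq => c.valid hadj ((Equiv.swap a b).injective heq))
      have hc' : ∀ x ∈ (↑({v₀} : Finset V) : Set V), c' x = C₀ x := by
        intro x hx
        simp only [Finset.coe_singleton, Set.mem_singleton_iff] at hx
        rw [hx]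
        show Equiv.swap a b (c v₀) = C₀ v₀
        rw [hcv₀, Equiv.swap_apply_of_ne_of_ne (Ne.symm ha') (Ne.symm hb')]
      have heq := huniq c' hc'
      have hww : Equiv.swap a b (c w) = c w := DFunLike.congr_fun heq w
      rw [hw, Equiv.swap_apply_left] at hww
      exact hab hww.symm
    have hcol2 : G.Colorable 2 := by
      have hcc := G.colorable_chromaticNumber_of_fintype
      rwa [hk2] at hcc
    obtain ⟨c2⟩ := hcol2
    refine ⟨{v | c2 v = 0}, fun u v huv => ?_⟩
    have hne2 := c2.valid huv
    simp only [Set.mem_setOf_eq]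
    revert hne2
    generalize c2 u = x
    generalize c2 v = y
    revert x y
    decide
  · rintro ⟨A, hA⟩
    let f : V → Fin 2 := fun v => if v ∈ A then 0 else 1
    have hf : ∀ {u v : V}, G.Adj u v → f u ≠ f v := by
      intro u v huv
      have hiff := hA u v huv
      by_cases hu : u ∈ A
      · have hv : v ∉ A := hiff.mp hu
        simp [f, hu, hv]
      · have hv : v ∈ A := not_not.mp (fun hv' => hu (hiff.mpr hv'))
        simp [f, hu, hv]
    have hcol2 : G.Colorable 2 := ⟨Coloring.mk f fun hadj => hf hadj⟩
    have hk2 : G.chromaticNumber.toNat = 2 := by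
      have hle : G.chromaticNumber ≤ (2 : ℕ) := hcol2.chromaticNumber_le
      have hge := two_le_chrom G hadj₀
      have heq : G.chromaticNumber = (2 : ℕ) := le_antisymm hle (by exact_mod_cast hge)
      rw [heq]
      rfl
    unfold sudokuNumber
    rw [hk2]
    obtain ⟨v₀⟩ := (inferInstance : Nonempty V)
    have cf : G.Coloring (Fin 2) := Coloring.mk f fun hadj => hf hadj
    have hmem1 : 1 ∈ {n | ∃ (S : Finset V) (C₀ : V → Fin 2),
        IsSudokuColoring G 2 S C₀ ∧ S.card = n} := by
      refine ⟨{v₀}, f, ⟨Coloring.mk f fun hadj => hf hadj, fun v _ => rfl, ?_⟩,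
        Finset.card_singleton v₀⟩
      intro c' hc'
      apply DFunLike.ext
      intro v
      have hv₀ : c' v₀ = f v₀ := hc' v₀ (by simp)
      obtain ⟨p⟩ := hconn v₀ v
      exact walk_two_coloring (Coloring.mk f fun hadj => hf hadj) c' p hv₀
    have h0 : 0 ∉ {n | ∃ (S : Finset V) (C₀ : V → Fin 2),
        IsSudokuColoring G 2 S C₀ ∧ S.card = n} := by
      rintro ⟨S, C₀, ⟨c, hc, huniq⟩, hcard⟩
      rw [Finset.card_eq_zero] at hcard
      subst hcard
      let c' : G.Coloring (Fin 2) := Coloring.mk (fun v => Equiv.swap 0 1 (c v))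
        (fun hadj heq => c.valid hadj ((Equiv.swap 0 1).injective heq))
      have h1 : c' = c := huniq c' (by simp)
      have h2 : Equiv.swap (0 : Fin 2) 1 (c u₀) = c u₀ := DFunLike.congr_fun h1 u₀
      have : ∀ x : Fin 2, Equiv.swap (0 : Fin 2) 1 x ≠ x := by decide
      exact this _ h2
    refine le_antisymm (Nat.sInf_le hmem1) ?_
    by_contra hlt
    push_neg at hlt
    have h0' : sInf {n | ∃ (S : Finset V) (C₀ : V → Fin 2),
        IsSudokuColoring G 2 S C₀ ∧ S.card = n} = 0 := Nat.lt_one_iff.mp hlt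
    exact h0 (h0' ▸ Nat.sInf_mem ⟨1, hmem1⟩)
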